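/- Let E be the graph with two vertices 1, 2, loops ℓ_1, ℓ_2 at each vertex and one edge r_1 from 1 to 2 (the graph of S³_q), and identify the morphism space 𝒢¹ of its graph groupoid with ℤ × R_tail, where R_tail = ℕ² ∪ {(+∞,+∞)} ⊆ ℕ̄², via the bijection (x,k,y) ↦ (k, Ψ(x), Ψ(y)) with Ψ(ℓ_2^∞) = 0, Ψ(ℓ_1^m r_1 ℓ_2^∞) = m+1, Ψ(ℓ_1^∞) = +∞. Then the transported graph-groupoid topology on ℤ × R_tail is generated by the singletons {(k,a,b)} with k ∈ ℤ and a,b ∈ ℕ, together with the sets Z_{k,m} := {(−k, j+k, j) : j ∈ ℕ̄, j ≥ m} for all k ∈ ℤ and m ∈ ℕ with m + k ≥ 0. -/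

import Mathlib

/-! Basic definitions: directed graphs, infinite path space, shift, finite paths,
shift equivalence, the graph groupoid and its topology (Kumjian-Pask-Raeburn-Renault). -/

variable {V E : Type*}

/-- The space `E^∞` of right-infinite paths of the graph with edge set `E`, source map `s`
and target map `t`, as a subset of the product `ℕ → E` (sequences of composable edges). -/
def PathSp (s t : E → V) : Set (ℕ → E) := {x | ∀ i : ℕ, t (x i) = s (x (i + 1))}

/-- The one-sided shift on the infinite path space. -/
def shiftP (s t : E → V) (x : PathSp s t) : PathSp s t :=
  ⟨fun i => x.1 (i + 1), fun i => x.2 (i + 1)⟩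

/-- Shift equivalence with lag `k`. -/
def SEquiv {X : Type*} (σ : X → X) (k : ℤ) (x y : X) : Prop :=
  ∃ j : ℕ, 0 ≤ (j : ℤ) + k ∧ σ^[j] x = σ^[((j : ℤ) + k).toNat] y

/-- A finite path in the graph: a composable (possibly empty) list of edges together with a
source vertex (so that vertices are the paths of length `0`). -/
structure FinPath (s t : E → V) where
  src : V
  edges : List E
  chain : edges.Chain' (fun e f => t e = s f)
  srcOk : ∀ e ∈ edges.head?, s e = src

/-- The target of a finite path (its source, if the path has length 0). -/
def FinPath.tgt {s t : E → V} (α : FinPath s t) : V :=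
  α.edges.getLast?.elim α.src t

/-- Concatenation of a finite list of edges with an infinite sequence of edges. -/
def catSeq (l : List E) (z : ℕ → E) : ℕ → E :=
  fun i => if h : i < l.length then l.get ⟨i, h⟩ else z (i - l.length)

/-- The basic set `Z(α,β) = {(αz, |β|-|α|, βz) : z ∈ E^∞, s(z) = t(α) = t(β)}` of the
graph groupoid. -/
def ZSet (s t : E → V) (α β : FinPath s t) :
    Set (↥(PathSp s t) × ℤ × ↥(PathSp s t)) :=
  {q | ∃ z : ↥(PathSp s t), s (z.1 0) = α.tgt ∧ s (z.1 0) = β.tgt ∧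
    q.1.1 = catSeq α.edges z.1 ∧
    q.2.1 = (β.edges.length : ℤ) - (α.edges.length : ℤ) ∧
    q.2.2.1 = catSeq β.edges z.1}

/-- The morphism space `𝒢¹ = {(x,k,y) : x ∼ₖ y}` of the graph groupoid. -/
def G1 (s t : E → V) : Type _ :=
  {q : ↥(PathSp s t) × ℤ × ↥(PathSp s t) // SEquiv (shiftP s t) q.2.1 q.1 q.2.2}

/-- The topology of the graph groupoid: generated by the sets `Z(α,β)` with
`t(α) = t(β)`. -/
def G1Top (s t : E → V) : TopologicalSpace (G1 s t) :=
  TopologicalSpace.generateFrom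
    {U | ∃ α β : FinPath s t, α.tgt = β.tgt ∧ U = Subtype.val ⁻¹' ZSet s t α β}

/-! The graph of the quantum sphere `S^{2n+1}_q` (Hong–Szymański, appendix version):
vertices `1, …, n+1` (here `Fin (n+1)`), a loop `ℓᵢ` at every vertex `i` (here `Sum.inl i`)
and an edge `rᵢ : i → i+1` for `1 ≤ i ≤ n` (here `Sum.inr i` for `i : Fin n`). -/

/-- The edge set of the graph of `S^{2n+1}_q`. -/
abbrev SphE (n : ℕ) := Fin (n + 1) ⊕ Fin n

/-- Source map of the graph of `S^{2n+1}_q`. -/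
def sphS (n : ℕ) : SphE n → Fin (n + 1)
  | .inl i => i
  | .inr i => i.castSucc

/-- Target map of the graph of `S^{2n+1}_q`. -/
def sphT (n : ℕ) : SphE n → Fin (n + 1)
  | .inl i => i
  | .inr i => i.succ

/-- The sum `k + m ∈ ℕ̄` of `k : ℤ` and `m : ℕ̄` (with `k + ∞ = ∞`; for finite `m` the value
is clamped to `0` when `m + k < 0`, which is immaterial under the condition `m + k ≥ 0`). -/
def addZE (k : ℤ) (m : ℕ∞) : ℕ∞ :=
  if m = ⊤ then ⊤ else ((((m.toNat : ℤ) + k).toNat : ℕ) : ℕ∞)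

/-- The tail-equivalence relation `R_tail = ℕ² ∪ {(+∞, +∞)} ⊆ ℕ̄²` for `S³_q`. -/
def RT : Set (ℕ∞ × ℕ∞) :=
  {q | (q.1 ≠ ⊤ ∧ q.2 ≠ ⊤) ∨ (q.1 = ⊤ ∧ q.2 = ⊤)}

/-- The set `Z_{k,m} = {(-k, j+k, j) : j ∈ ℕ̄, j ≥ m} ⊆ ℤ × ℕ̄ × ℕ̄`. -/
def Zkm (k : ℤ) (m : ℕ) : Set (ℤ × ℕ∞ × ℕ∞) :=
  {p | ∃ j : ℕ∞, (m : ℕ∞) ≤ j ∧ p = (-k, addZE k j, j)}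

namespace St11

abbrev P := PathSp (sphS 1) (sphT 1)

def y0 : ↥P := ⟨fun _ => Sum.inl 1, fun _ => rfl⟩

def yT : ↥P := ⟨fun _ => Sum.inl 0, fun _ => rfl⟩

def ymfun (m : ℕ) : ℕ → SphE 1 :=
  fun j => if j < m then Sum.inl 0 else if j = m then Sum.inr 0 else Sum.inl 1

def ym (m : ℕ) : ↥P :=
  ⟨ymfun m, by
    intro i
    unfold ymfun
    by_cases h1 : i < m
    · by_cases h2 : i + 1 < m
      · simp [h1, h2]; rfl
      · have h3 : i + 1 = m := by omega
        simp [h1, h2, h3]; rfl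
    · by_cases h2 : i = m
      · have h3 : ¬ (i + 1 < m) := by omega
        have h4 : i + 1 ≠ m := by omega
        simp [h1, h2, h3, h4]; rfl
      · have h3 : ¬ (i + 1 < m) := by omega
        have h4 : i + 1 ≠ m := by omega
        simp [h1, h2, h3, h4]; rfl⟩

lemma edge_t0 (e : SphE 1) (h : sphT 1 e = 0) : e = Sum.inl 0 := by
  rcases e with i | i
  · fin_cases i
    · rfl
    · exact absurd h (by decide)
  · fin_cases i; exact absurd h (by decide)

lemma edge_s1 (e : SphE 1) (h : sphS 1 e = 1) : e = Sum.inl 1 := by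
  rcases e with i | i
  · fin_cases i
    · exact absurd h (by decide)
    · rfl
  · fin_cases i; exact absurd h (by decide)

/-- classification of infinite paths -/
lemma classify (x : ↥P) : x = y0 ∨ (∃ m, x = ym m) ∨ x = yT := by
  classical
  by_cases hT : ∀ j, x.1 j = Sum.inl 0
  · right; right; exact Subtype.ext (funext hT)
  · push_neg at hT
    set m := Nat.find hT with hm
    have hmlt : x.1 m ≠ Sum.inl 0 := Nat.find_spec hT
    have hbelow : ∀ i, i < m → x.1 i = Sum.inl 0 := fun i hi => by
      by_contra hc
      have h9 : Nat.find hT ≤ i := Nat.find_le hc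
      omega
    have hafter : ∀ j, x.1 j ≠ Sum.inl 0 → x.1 (j+1) = Sum.inl 1 := by
      intro j hj
      apply edge_s1
      rw [← x.2 j]
      rcases hxj : x.1 j with i | i
      · rw [hxj] at hj
        fin_cases i
        · exact absurd rfl hj
        · rfl
      · fin_cases i; rfl
    have htail : ∀ j, m < j → x.1 j = Sum.inl 1 := by
      intro j
      induction j with
      | zero => intro h; omega
      | succ n ih =>
        intro hj
        rcases Nat.lt_or_ge m n with h | h
        · refine hafter n ?_
          rw [ih h]
          decide
        · have hnm : n = m := by omega
          rw [hnm]
          exact hafter m hmlt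
    rcases hm0 : x.1 m with i | i
    · fin_cases i
      · exact absurd hm0 hmlt
      · -- x = y0
        have hm0' : m = 0 := by
          by_contra h
          have h1 := x.2 (m-1)
          rw [hbelow (m-1) (by omega)] at h1
          have h2 : m - 1 + 1 = m := by omega
          rw [h2, hm0] at h1
          exact absurd h1 (by decide)
        left
        apply Subtype.ext; funext j
        cases j with
        | zero => rw [← hm0', hm0]; rfl
        | succ n => exact htail (n+1) (by omega)
    · fin_cases i
      right; left
      refine ⟨m, Subtype.ext (funext fun j => ?_)⟩
      show x.1 j = ymfun m j
      unfold ymfun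
      by_cases h1 : j < m
      · simp [h1, hbelow j h1]
      · by_cases h2 : j = m
        · subst h2; simpa [h1] using hm0
        · simp [h1, h2, htail j (by omega)]

end St11
namespace St11

abbrev σP := shiftP (sphS 1) (sphT 1)

lemma shift_iter (j : ℕ) (x : ↥P) : σP^[j] x = ⟨fun i => x.1 (i + j), fun i => by
    have := x.2 (i + j); simpa [Nat.add_right_comm] using this⟩ := by
  induction j with
  | zero => simp
  | succ n ih =>
    rw [Function.iterate_succ_apply', ih]
    apply Subtype.ext; funext i
    show x.1 (i + 1 + n) = x.1 (i + (n+1))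
    rw [show i + 1 + n = i + (n+1) by omega]

lemma shift_y0 (j : ℕ) : σP^[j] y0 = y0 := by
  rw [shift_iter]; rfl

lemma shift_yT (j : ℕ) : σP^[j] yT = yT := by
  rw [shift_iter]; rfl

lemma shift_ym_le (j m : ℕ) (h : j ≤ m) : σP^[j] (ym m) = ym (m - j) := by
  rw [shift_iter]
  apply Subtype.ext; funext i
  show ymfun m (i + j) = ymfun (m - j) i
  unfold ymfun
  by_cases h1 : i < m - j
  · simp [h1, show i + j < m by omega]
  · by_cases h2 : i = m - j
    · subst h2
      simp [show ¬ (m - j + j < m) by omega, show m - j + j = m by omega]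
    · simp [h1, h2, show ¬ (i + j < m) by omega, show i + j ≠ m by omega]

lemma shift_ym_gt (j m : ℕ) (h : m < j) : σP^[j] (ym m) = y0 := by
  rw [shift_iter]
  apply Subtype.ext; funext i
  show ymfun m (i + j) = Sum.inl 1
  unfold ymfun
  simp [show ¬ (i + j < m) by omega, show i + j ≠ m by omega]

-- distinctness
lemma y0_ne_yT : y0 ≠ yT := by
  intro h
  have := congrFun (congrArg Subtype.val h) 0
  simp [y0, yT] at this

lemma ym_ne_yT (m : ℕ) : ym m ≠ yT := by
  intro h
  have := congrFun (congrArg Subtype.val h) m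
  simp [ym, ymfun, yT] at this

lemma y0_ne_ym (m : ℕ) : y0 ≠ ym m := by
  intro h
  have := congrFun (congrArg Subtype.val h) m
  simp [y0, ym, ymfun] at this

-- xfin
def xfin : ℕ → ↥P
  | 0 => y0
  | a + 1 => ym a

lemma xfin_ne_yT (a : ℕ) : xfin a ≠ yT := by
  cases a with
  | zero => exact y0_ne_yT
  | succ n => exact ym_ne_yT n

lemma shift_xfin (j a : ℕ) (h : a ≤ j) : σP^[j] (xfin a) = y0 := by
  cases a with
  | zero => exact shift_y0 j
  | succ n => exact shift_ym_gt j n (by omega)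

lemma tgt_eq_get (α : FinPath (sphS 1) (sphT 1)) (h : α.edges ≠ []) :
    α.tgt = sphT 1 (α.edges.get ⟨α.edges.length - 1,
      Nat.sub_lt (List.length_pos_iff.mpr h) Nat.one_pos⟩) := by
  unfold FinPath.tgt
  rw [List.getLast?_eq_getLast h]
  simp [List.getLast_eq_getElem]

-- catSeq basics
lemma catSeq_mem (α : FinPath (sphS 1) (sphT 1)) (z : ↥P) (h : sphS 1 (z.1 0) = α.tgt) :
    catSeq α.edges z.1 ∈ P := by
  intro i
  unfold catSeq
  rcases lt_trichotomy (i + 1) α.edges.length with h1 | h1 | h1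
  · have h2 : i < α.edges.length := by omega
    simp only [h2, h1, dif_pos]
    exact List.isChain_iff_getElem.mp α.chain i (by omega)
  · have h2 : i < α.edges.length := by omega
    rw [dif_pos h2, dif_neg (show ¬ (i + 1 < α.edges.length) by omega)]
    have h5 : i + 1 - α.edges.length = 0 := by omega
    have hne : α.edges ≠ [] := by intro hc; rw [hc] at h2; simp at h2
    rw [h5, h, tgt_eq_get α hne]
    have h6 : i = α.edges.length - 1 := by omega
    subst h6
    rfl
  · have h2 : ¬ (i < α.edges.length) := by omega
    have h3 : ¬ (i + 1 < α.edges.length) := by omega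
    simp only [h2, h3, dif_neg]
    have h4 : i + 1 - α.edges.length = (i - α.edges.length) + 1 := by omega
    rw [h4]
    exact z.2 _

lemma shift_catSeq (α : FinPath (sphS 1) (sphT 1)) (z : ↥P) (h : sphS 1 (z.1 0) = α.tgt) :
    σP^[α.edges.length] ⟨catSeq α.edges z.1, catSeq_mem α z h⟩ = z := by
  rw [shift_iter]
  apply Subtype.ext; funext i
  show catSeq α.edges z.1 (i + α.edges.length) = z.1 i
  unfold catSeq
  simp [show ¬ (i + α.edges.length < α.edges.length) by omega]

end St11
namespace St11

/-- finite path from the first `L` edges of an infinite path -/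
def genFP (x : ↥P) (L : ℕ) : FinPath (sphS 1) (sphT 1) where
  src := sphS 1 (x.1 0)
  edges := List.ofFn (fun i : Fin L => x.1 i)
  chain := by
    unfold List.Chain'
    rw [List.isChain_iff_getElem]
    intro i h
    simp only [List.getElem_ofFn, List.length_ofFn] at *
    have := x.2 i
    convert this using 2 <;> simp
  srcOk := by
    intro e he
    cases L with
    | zero => simp at he
    | succ n =>
      rw [List.ofFn_succ] at he
      simp at he
      rw [he]

@[simp] lemma genFP_len (x : ↥P) (L : ℕ) : (genFP x L).edges.length = L := by
  simp [genFP]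

lemma genFP_tgt (x : ↥P) (L : ℕ) (hL : 0 < L) :
    (genFP x L).tgt = sphT 1 (x.1 (L - 1)) := by
  have hne : (genFP x L).edges ≠ [] := by
    intro hc
    have := congrArg List.length hc
    simp at this; omega
  rw [tgt_eq_get _ hne]
  congr 1
  simp [genFP]

lemma catSeq_genFP (x : ↥P) (L : ℕ) (z : ℕ → SphE 1) (h : ∀ j, L ≤ j → x.1 j = z (j - L)) :
    catSeq (genFP x L).edges z = x.1 := by
  funext i
  unfold catSeq
  by_cases h1 : i < (genFP x L).edges.length
  · simp only [dif_pos h1]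
    simp [genFP]
  · rw [dif_neg h1]
    simp only [genFP_len] at h1 ⊢
    exact (h i (by omega)).symm

-- the canonical finite paths
lemma genFP_xfin_tgt (a L : ℕ) (h : a ≤ L) : (genFP (xfin a) L).tgt = 1 := by
  cases a with
  | zero =>
    cases L with
    | zero => rfl
    | succ n => rw [genFP_tgt _ _ (by omega)]; rfl
  | succ n =>
    rw [genFP_tgt _ _ (by omega)]
    show sphT 1 (ymfun n (L - 1)) = 1
    unfold ymfun
    by_cases h1 : L - 1 < n
    · omega
    · by_cases h2 : L - 1 = n
      · simp [h1, h2]; rfl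
      · simp [h1, h2]; rfl

lemma catSeq_genFP_xfin (a L : ℕ) (h : a ≤ L) :
    catSeq (genFP (xfin a) L).edges y0.1 = (xfin a).1 := by
  apply catSeq_genFP
  intro j hj
  show (xfin a).1 j = Sum.inl 1
  cases a with
  | zero => rfl
  | succ n =>
    show ymfun n j = Sum.inl 1
    unfold ymfun
    simp [show ¬ (j < n) by omega, show j ≠ n by omega]

lemma genFP_yT_tgt (a : ℕ) : (genFP yT a).tgt = 0 := by
  cases a with
  | zero => rfl
  | succ n => rw [genFP_tgt _ _ (by omega)]; rfl

lemma catSeq_genFP_yT_ym (a m : ℕ) :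
    catSeq (genFP yT a).edges (ym m).1 = (ym (a + m)).1 := by
  funext i
  unfold catSeq
  by_cases h1 : i < (genFP yT a).edges.length
  · simp only [dif_pos h1]
    simp only [genFP_len] at h1
    show _ = ymfun (a + m) i
    simp [genFP, yT, ymfun, show i < a + m by omega]
  · rw [dif_neg h1]
    simp only [genFP_len] at h1 ⊢
    show ymfun m (i - a) = ymfun (a + m) i
    unfold ymfun
    by_cases h2 : i - a < m
    · simp [h2, show i < a + m by omega]
    · by_cases h3 : i - a = m
      · simp [h2, h3, show ¬ (i < a+m) by omega, show i = a + m by omega]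
      · simp [h2, h3, show ¬ (i < a+m) by omega, show i ≠ a + m by omega]

lemma catSeq_genFP_yT_yT (a : ℕ) :
    catSeq (genFP yT a).edges yT.1 = yT.1 := by
  apply catSeq_genFP
  intro j hj
  rfl

/-- structure of finite paths ending at vertex 0 -/
lemma tgt0_struct (α : FinPath (sphS 1) (sphT 1)) (h : α.tgt = 0) :
    α = genFP yT α.edges.length := by
  have hall : ∀ i (hi : i < α.edges.length), α.edges.get ⟨i, hi⟩ = Sum.inl 0 := by
    have key : ∀ d i (hi : i < α.edges.length), i + d + 1 = α.edges.length →
        α.edges.get ⟨i, hi⟩ = Sum.inl 0 := by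
      intro d
      induction d with
      | zero =>
        intro i hi hlen
        apply edge_t0
        have hne : α.edges ≠ [] := by intro hc; rw [hc] at hi; simp at hi
        have h7 := tgt_eq_get α hne
        rw [h] at h7
        have h8 : (⟨i, hi⟩ : Fin α.edges.length) =
            ⟨α.edges.length - 1, Nat.sub_lt (List.length_pos_iff.mpr hne) Nat.one_pos⟩ := by
          simp only [Fin.mk.injEq]; omega
        rw [h8]
        exact h7.symm
      | succ d ih =>
        intro i hi hlen
        apply edge_t0
        have hc : sphT 1 (α.edges.get ⟨i, hi⟩) = sphS 1 (α.edges.get ⟨i+1, by omega⟩) :=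
          List.isChain_iff_getElem.mp α.chain i (by omega)
        rw [hc, ih (i+1) (by omega) (by omega)]
        rfl
    intro i hi
    exact key (α.edges.length - 1 - i) i hi (by omega)
  have hmem : ∀ b ∈ α.edges, b = Sum.inl 0 := by
    intro b hb
    rcases List.mem_iff_get.mp hb with ⟨i, hi⟩
    rw [← hi]
    exact hall i.1 i.2
  have hlen : α.edges = List.ofFn (fun _ : Fin α.edges.length => (Sum.inl 0 : SphE 1)) := by
    apply List.ext_get (by simp)
    intro i h1 h2
    simp only [List.get_ofFn]
    exact hall i h1
  have hsrc : α.src = 0 := by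
    cases he : α.edges with
    | nil =>
      have h9 : α.tgt = α.src := by unfold FinPath.tgt; rw [he]; rfl
      rw [← h9, h]
    | cons e l =>
      have h0 : e = Sum.inl 0 := hmem e (by rw [he]; exact List.mem_cons_self)
      have h9 := α.srcOk e (by rw [he]; rfl)
      rw [h0] at h9
      exact h9.symm
  have hext : ∀ (β γ : FinPath (sphS 1) (sphT 1)), β.src = γ.src → β.edges = γ.edges →
      β = γ := by
    intro β γ h1 h2
    cases β; cases γ
    simp only at h1 h2
    subst h1; subst h2
    rfl
  apply hext
  · rw [hsrc]; rfl
  · exact hlen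

/-- paths starting at vertex 1 are y0; at vertex 0 are ym or yT -/
lemma start1 (z : ↥P) (h : sphS 1 (z.1 0) = 1) : z = y0 := by
  rcases classify z with h1 | ⟨m, h1⟩ | h1
  · exact h1
  · exfalso
    rw [h1] at h
    cases m with
    | zero => exact absurd h (by decide)
    | succ n =>
      have : (ym (n+1)).1 0 = Sum.inl 0 := by simp [ym, ymfun]
      rw [this] at h
      exact absurd h (by decide)
  · exfalso; rw [h1] at h; exact absurd h (by decide)

lemma start0 (z : ↥P) (h : sphS 1 (z.1 0) = 0) : (∃ m, z = ym m) ∨ z = yT := by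
  rcases classify z with h1 | h1 | h1
  · exfalso; rw [h1] at h; exact absurd h (by decide)
  · left; exact h1
  · right; exact h1

lemma start_ym (m : ℕ) : sphS 1 ((ym m).1 0) = 0 := by
  cases m with
  | zero => rfl
  | succ n =>
    have : (ym (n+1)).1 0 = Sum.inl 0 := by simp [ym, ymfun]
    rw [this]; rfl

end St11
namespace St11

lemma coe_succ (m : ℕ) : (m : ℕ∞) + 1 = ((m + 1 : ℕ) : ℕ∞) := by push_cast; ring

section PsiLemmas

variable (Ψ : ↥P → ℕ∞)
  (hΨ2 : ∀ x : ↥P, (∀ j : ℕ, x.1 j = Sum.inl 1) → Ψ x = 0)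
  (hΨm : ∀ (m : ℕ) (x : ↥P),
      (∀ j : ℕ, x.1 j =
        if j < m then (Sum.inl 0 : SphE 1) else if j = m then Sum.inr 0 else Sum.inl 1) →
      Ψ x = (m : ℕ∞) + 1)
  (hΨ1 : ∀ x : ↥P, (∀ j : ℕ, x.1 j = Sum.inl 0) → Ψ x = ⊤)

include hΨ2 in
lemma psi_y0 : Ψ y0 = 0 := hΨ2 y0 (fun _ => rfl)

include hΨ1 in
lemma psi_yT : Ψ yT = ⊤ := hΨ1 yT (fun _ => rfl)

include hΨm in
lemma psi_ym (m : ℕ) : Ψ (ym m) = (m : ℕ∞) + 1 := hΨm m (ym m) (fun _ => rfl)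

include hΨ2 hΨm in
lemma psi_xfin (a : ℕ) : Ψ (xfin a) = (a : ℕ∞) := by
  cases a with
  | zero => simpa [xfin] using psi_y0 Ψ hΨ2
  | succ n => rw [show xfin (n+1) = ym n from rfl, psi_ym Ψ hΨm, coe_succ]

include hΨ2 hΨm hΨ1 in
lemma psi_inj : Function.Injective Ψ := by
  have hy0 := psi_y0 Ψ hΨ2
  have hyT := psi_yT Ψ hΨ1
  have hym := psi_ym Ψ hΨm
  intro x y h
  rcases classify x with hx | ⟨m, hx⟩ | hx <;>
    rcases classify y with hy | ⟨m', hy⟩ | hy <;> subst hx <;> subst hy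
  · rfl
  · rw [hy0, hym, coe_succ] at h
    rw [show (0:ℕ∞) = ((0:ℕ):ℕ∞) from rfl] at h
    exact absurd (Nat.cast_inj.mp h) (by omega)
  · rw [hy0, hyT] at h; exact absurd h (by simp)
  · rw [hy0, hym, coe_succ] at h
    rw [show (0:ℕ∞) = ((0:ℕ):ℕ∞) from rfl] at h
    exact absurd (Nat.cast_inj.mp h.symm) (by omega)
  · rw [hym, hym, coe_succ, coe_succ] at h
    have := Nat.cast_inj.mp h
    congr 1
    omega
  · rw [hym, hyT, coe_succ] at h
    exact absurd h (ENat.coe_ne_top _)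
  · rw [hy0, hyT] at h; exact absurd h.symm (by simp)
  · rw [hym, hyT, coe_succ] at h
    exact absurd h.symm (ENat.coe_ne_top _)
  · rfl

include hΨ2 hΨm hΨ1 in
lemma psi_top_iff (x : ↥P) : Ψ x = ⊤ ↔ x = yT := by
  constructor
  · intro h
    exact psi_inj Ψ hΨ2 hΨm hΨ1 (h.trans (psi_yT Ψ hΨ1).symm)
  · intro h; rw [h]; exact psi_yT Ψ hΨ1

include hΨ2 hΨm hΨ1 in
lemma psi_eq_coe (x : ↥P) (n : ℕ) (h : Ψ x = (n : ℕ∞)) : x = xfin n :=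
  psi_inj Ψ hΨ2 hΨm hΨ1 (h.trans (psi_xfin Ψ hΨ2 hΨm n).symm)

include hΨ2 hΨm hΨ1 in
lemma psi_fin (x : ↥P) (h : x ≠ yT) : ∃ a : ℕ, Ψ x = (a : ℕ∞) ∧ x = xfin a := by
  rcases classify x with hx | ⟨m, hx⟩ | hx
  · exact ⟨0, by rw [hx]; exact psi_y0 Ψ hΨ2, by rw [hx]; rfl⟩
  · exact ⟨m + 1, by rw [hx, psi_ym Ψ hΨm, coe_succ], by rw [hx]; rfl⟩
  · exact absurd hx h

end PsiLemmas

-- SEquiv lemmas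
lemma shift_eq_yT_iff (j : ℕ) (x : ↥P) : σP^[j] x = yT ↔ x = yT := by
  constructor
  · intro h
    rcases classify x with hx | ⟨m, hx⟩ | hx
    · rw [hx, shift_y0 j] at h; exact absurd h y0_ne_yT
    · rw [hx] at h
      rcases le_or_gt j m with h1 | h1
      · rw [shift_ym_le j m h1] at h; exact absurd h (ym_ne_yT _)
      · rw [shift_ym_gt j m h1] at h; exact absurd h y0_ne_yT
    · exact hx
  · intro h; rw [h]; exact shift_yT j

lemma sequiv_xfin (k : ℤ) (a b : ℕ) : SEquiv σP k (xfin a) (xfin b) := by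
  refine ⟨a + b + k.natAbs, by omega, ?_⟩
  rw [shift_xfin _ a (by omega), shift_xfin _ b (by omega)]

lemma sequiv_yT (k : ℤ) : SEquiv σP k yT yT := by
  refine ⟨k.natAbs, by omega, ?_⟩
  rw [shift_yT, shift_yT]

lemma sequiv_yT_iff (k : ℤ) (x y : ↥P) (h : SEquiv σP k x y) : x = yT ↔ y = yT := by
  obtain ⟨j, hj, he⟩ := h
  constructor
  · intro hx
    rw [← shift_eq_yT_iff ((j : ℤ) + k).toNat, ← he, shift_eq_yT_iff]
    exact hx
  · intro hy
    rw [← shift_eq_yT_iff j, he, shift_eq_yT_iff]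
    exact hy

end St11
namespace St11

lemma addZE_coe (k : ℤ) (n : ℕ) : addZE k (n : ℕ∞) = ((((n : ℤ) + k).toNat : ℕ) : ℕ∞) := by
  simp [addZE]

lemma addZE_top (k : ℤ) : addZE k ⊤ = ⊤ := by simp [addZE]

section Main

variable (Ψ : ↥P → ℕ∞)
  (hΨ2 : ∀ x : ↥P, (∀ j : ℕ, x.1 j = Sum.inl 1) → Ψ x = 0)
  (hΨm : ∀ (m : ℕ) (x : ↥P),
      (∀ j : ℕ, x.1 j =
        if j < m then (Sum.inl 0 : SphE 1) else if j = m then Sum.inr 0 else Sum.inl 1) →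
      Ψ x = (m : ℕ∞) + 1)
  (hΨ1 : ∀ x : ↥P, (∀ j : ℕ, x.1 j = Sum.inl 0) → Ψ x = ⊤)

def Phi : G1 (sphS 1) (sphT 1) → ℤ × ℕ∞ × ℕ∞ := fun g => (g.1.2.1, Ψ g.1.1, Ψ g.1.2.2)

include hΨ2 hΨm hΨ1 in
lemma zset_tgt1 (α β : FinPath (sphS 1) (sphT 1)) (hα : α.tgt = 1) (hβ : β.tgt = 1) :
    (Subtype.val ⁻¹' ZSet (sphS 1) (sphT 1) α β : Set (G1 (sphS 1) (sphT 1))) =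
    Phi Ψ ⁻¹' {(((β.edges.length : ℤ) - α.edges.length : ℤ),
        Ψ ⟨catSeq α.edges y0.1, catSeq_mem α y0 (by rw [hα]; rfl)⟩,
        Ψ ⟨catSeq β.edges y0.1, catSeq_mem β y0 (by rw [hβ]; rfl)⟩)} := by
  ext g
  simp only [Set.mem_preimage, Set.mem_singleton_iff]
  constructor
  · rintro ⟨z, hz1, hz2, hx, hk, hy⟩
    have hz : z = y0 := start1 z (by rw [hz1, hα])
    subst hz
    have hgx : g.1.1 = ⟨catSeq α.edges y0.1, catSeq_mem α y0 (by rw [hα]; rfl)⟩ :=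
      Subtype.ext hx
    have hgy : g.1.2.2 = ⟨catSeq β.edges y0.1, catSeq_mem β y0 (by rw [hβ]; rfl)⟩ :=
      Subtype.ext hy
    show (g.1.2.1, Ψ g.1.1, Ψ g.1.2.2) = _
    rw [hgx, hgy, hk]
  · intro h
    have h1 : g.1.2.1 = (β.edges.length : ℤ) - α.edges.length := congrArg Prod.fst h
    have h2 : Ψ g.1.1 = Ψ ⟨catSeq α.edges y0.1, catSeq_mem α y0 (by rw [hα]; rfl)⟩ :=
      congrArg (fun p => p.2.1) h
    have h3 : Ψ g.1.2.2 = Ψ ⟨catSeq β.edges y0.1, catSeq_mem β y0 (by rw [hβ]; rfl)⟩ :=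
      congrArg (fun p => p.2.2) h
    refine ⟨y0, by rw [hα]; rfl, by rw [hβ]; rfl, ?_, h1, ?_⟩
    · exact congrArg Subtype.val (psi_inj Ψ hΨ2 hΨm hΨ1 h2)
    · exact congrArg Subtype.val (psi_inj Ψ hΨ2 hΨm hΨ1 h3)

include hΨ2 hΨm hΨ1 in
lemma zset_tgt0 (a b : ℕ) :
    (Subtype.val ⁻¹' ZSet (sphS 1) (sphT 1) (genFP yT a) (genFP yT b)
      : Set (G1 (sphS 1) (sphT 1))) =
    Phi Ψ ⁻¹' Zkm ((a : ℤ) - b) (b + 1) := by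
  ext g
  simp only [Set.mem_preimage]
  constructor
  · rintro ⟨z, hz1, hz2, hx, hk, hy⟩
    rcases start0 z (by rw [hz1, genFP_yT_tgt]) with ⟨m, hm⟩ | hzT
    · subst hm
      have hgx : g.1.1 = ym (a + m) := Subtype.ext (by rw [hx, catSeq_genFP_yT_ym])
      have hgy : g.1.2.2 = ym (b + m) := Subtype.ext (by rw [hy, catSeq_genFP_yT_ym])
      have hgk : g.1.2.1 = -((a:ℤ) - b) := by
        rw [hk, genFP_len, genFP_len]; ring
      have hpx : Ψ g.1.1 = addZE ((a:ℤ) - b) (((b + m + 1 : ℕ) : ℕ∞)) := by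
        rw [hgx, psi_ym Ψ hΨm, coe_succ, addZE_coe]
        congr 1
        omega
      have hpy : Ψ g.1.2.2 = ((b + m + 1 : ℕ) : ℕ∞) := by
        rw [hgy, psi_ym Ψ hΨm, coe_succ]
      refine ⟨((b + m + 1 : ℕ) : ℕ∞), by exact_mod_cast (by omega : b + 1 ≤ b + m + 1), ?_⟩
      show (g.1.2.1, Ψ g.1.1, Ψ g.1.2.2) = _
      rw [hgk, hpx, hpy]
    · subst hzT
      have hgx : g.1.1 = yT := Subtype.ext (by rw [hx, catSeq_genFP_yT_yT])
      have hgy : g.1.2.2 = yT := Subtype.ext (by rw [hy, catSeq_genFP_yT_yT])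
      have hgk : g.1.2.1 = -((a:ℤ) - b) := by
        rw [hk, genFP_len, genFP_len]; ring
      refine ⟨⊤, le_top, ?_⟩
      show (g.1.2.1, Ψ g.1.1, Ψ g.1.2.2) = _
      rw [hgk, hgx, hgy, psi_yT Ψ hΨ1, addZE_top]
  · rintro ⟨j, hj, hjeq⟩
    have h1 : g.1.2.1 = -((a:ℤ) - b) := congrArg Prod.fst hjeq
    have h2 : Ψ g.1.1 = addZE ((a:ℤ) - b) j := congrArg (fun p => p.2.1) hjeq
    have h3 : Ψ g.1.2.2 = j := congrArg (fun p => p.2.2) hjeq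
    induction j using ENat.recTopCoe with
    | top =>
      rw [addZE_top] at h2
      have hgx : g.1.1 = yT := (psi_top_iff Ψ hΨ2 hΨm hΨ1 _).mp h2
      have hgy : g.1.2.2 = yT := (psi_top_iff Ψ hΨ2 hΨm hΨ1 _).mp h3
      refine ⟨yT, by rw [genFP_yT_tgt]; rfl, by rw [genFP_yT_tgt]; rfl, ?_, ?_, ?_⟩
      · rw [catSeq_genFP_yT_yT]; exact congrArg Subtype.val hgx
      · rw [h1, genFP_len, genFP_len]; ring
      · rw [catSeq_genFP_yT_yT]; exact congrArg Subtype.val hgy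
    | coe n =>
      have hbn : b + 1 ≤ n := by exact_mod_cast hj
      set m := n - b - 1 with hmdef
      have hn : n = b + m + 1 := by omega
      rw [addZE_coe] at h2
      have h2' : Ψ g.1.1 = ((a + m + 1 : ℕ) : ℕ∞) := by
        rw [h2]; congr 1; omega
      have hgx : g.1.1 = ym (a + m) := psi_eq_coe Ψ hΨ2 hΨm hΨ1 _ _ h2'
      have hgy : g.1.2.2 = ym (b + m) := by
        have := psi_eq_coe Ψ hΨ2 hΨm hΨ1 _ _ (h3.trans (by rw [hn]))
        rw [this]; rfl
      refine ⟨ym m, by rw [start_ym, genFP_yT_tgt], by rw [start_ym, genFP_yT_tgt],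
        ?_, ?_, ?_⟩
      · rw [catSeq_genFP_yT_ym]; exact congrArg Subtype.val hgx
      · rw [h1, genFP_len, genFP_len]; ring
      · rw [catSeq_genFP_yT_ym]; exact congrArg Subtype.val hgy

end Main

end St11
namespace St11

section Main2

variable (Ψ : ↥P → ℕ∞)
  (hΨ2 : ∀ x : ↥P, (∀ j : ℕ, x.1 j = Sum.inl 1) → Ψ x = 0)
  (hΨm : ∀ (m : ℕ) (x : ↥P),
      (∀ j : ℕ, x.1 j =
        if j < m then (Sum.inl 0 : SphE 1) else if j = m then Sum.inr 0 else Sum.inl 1) →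
      Ψ x = (m : ℕ∞) + 1)
  (hΨ1 : ∀ x : ↥P, (∀ j : ℕ, x.1 j = Sum.inl 0) → Ψ x = ⊤)

include hΨ2 hΨm in
lemma psi_cat_xfin (a L : ℕ) (h : a ≤ L) (pf : catSeq (genFP (xfin a) L).edges y0.1 ∈ P) :
    Ψ ⟨catSeq (genFP (xfin a) L).edges y0.1, pf⟩ = (a : ℕ∞) := by
  have h9 : (⟨catSeq (genFP (xfin a) L).edges y0.1, pf⟩ : ↥P) = xfin a :=
    Subtype.ext (catSeq_genFP_xfin a L h)
  rw [h9, psi_xfin Ψ hΨ2 hΨm]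

include hΨ2 hΨm hΨ1 in
lemma singleton_as_zset (k : ℤ) (a b : ℕ) :
    ∃ α β : FinPath (sphS 1) (sphT 1), α.tgt = β.tgt ∧
      (Subtype.val ⁻¹' ZSet (sphS 1) (sphT 1) α β : Set (G1 (sphS 1) (sphT 1))) =
        Phi Ψ ⁻¹' {(k, (a : ℕ∞), (b : ℕ∞))} := by
  set L : ℕ := a + b + 1 + k.natAbs with hL
  set L' : ℕ := ((L : ℤ) + k).toNat with hL'
  have ha : a ≤ L := by omega
  have hb : b ≤ L' := by omega
  have hak : (L' : ℤ) - L = k := by omega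
  refine ⟨genFP (xfin a) L, genFP (xfin b) L',
    by rw [genFP_xfin_tgt a L ha, genFP_xfin_tgt b L' hb], ?_⟩
  rw [zset_tgt1 Ψ hΨ2 hΨm hΨ1 _ _ (genFP_xfin_tgt a L ha) (genFP_xfin_tgt b L' hb)]
  refine congrArg (fun S => Phi Ψ ⁻¹' S) ?_
  rw [Set.singleton_eq_singleton_iff]
  refine Prod.ext_iff.mpr ⟨?_, Prod.ext_iff.mpr ⟨?_, ?_⟩⟩
  · show ((genFP (xfin b) L').edges.length : ℤ) - (genFP (xfin a) L).edges.length = k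
    rw [genFP_len, genFP_len]; exact hak
  · exact psi_cat_xfin Ψ hΨ2 hΨm a L ha _
  · exact psi_cat_xfin Ψ hΨ2 hΨm b L' hb _

end Main2

lemma zkm_split (k : ℤ) (m : ℕ) :
    Zkm k m = Zkm k (m + 1 + (-k).toNat) ∪
      ⋃ i ∈ Finset.range (1 + (-k).toNat),
        ({((-k : ℤ), addZE k ((m + i : ℕ) : ℕ∞), ((m + i : ℕ) : ℕ∞))}
          : Set (ℤ × ℕ∞ × ℕ∞)) := by
  ext p
  simp only [Zkm, Set.mem_union, Set.mem_setOf_eq, Set.mem_iUnion, Set.mem_singleton_iff,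
    Finset.mem_range]
  constructor
  · rintro ⟨j, hj, rfl⟩
    induction j using ENat.recTopCoe with
    | top => left; exact ⟨⊤, le_top, rfl⟩
    | coe n =>
      have hmn : m ≤ n := by exact_mod_cast hj
      rcases le_or_gt (m + 1 + (-k).toNat) n with h | h
      · left; exact ⟨(n : ℕ∞), by exact_mod_cast h, rfl⟩
      · right
        refine ⟨n - m, by omega, ?_⟩
        rw [show m + (n - m) = n by omega]
  · rintro (⟨j, hj, rfl⟩ | ⟨i, hi, rfl⟩)
    · refine ⟨j, le_trans ?_ hj, rfl⟩
      exact_mod_cast (by omega : m ≤ m + 1 + (-k).toNat)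
    · exact ⟨((m + i : ℕ) : ℕ∞), by exact_mod_cast (by omega : m ≤ m + i), rfl⟩

end St11
namespace St11

lemma cat_ne_yT (α : FinPath (sphS 1) (sphT 1)) (pf : catSeq α.edges y0.1 ∈ P) :
    (⟨catSeq α.edges y0.1, pf⟩ : ↥P) ≠ yT := by
  intro h
  have h2 := congrFun (congrArg Subtype.val h) α.edges.length
  unfold catSeq at h2
  simp only [lt_irrefl, dif_neg, Nat.sub_self] at h2
  exact absurd h2 (by simp [y0, yT])

section Main3

variable (Ψ : ↥P → ℕ∞)
  (hΨ2 : ∀ x : ↥P, (∀ j : ℕ, x.1 j = Sum.inl 1) → Ψ x = 0)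
  (hΨm : ∀ (m : ℕ) (x : ↥P),
      (∀ j : ℕ, x.1 j =
        if j < m then (Sum.inl 0 : SphE 1) else if j = m then Sum.inr 0 else Sum.inl 1) →
      Ψ x = (m : ℕ∞) + 1)
  (hΨ1 : ∀ x : ↥P, (∀ j : ℕ, x.1 j = Sum.inl 0) → Ψ x = ⊤)

include hΨ2 hΨm hΨ1 in
lemma zset_tgt1' (α β : FinPath (sphS 1) (sphT 1)) (hα : α.tgt = 1) (hβ : β.tgt = 1) :
    ∃ a b : ℕ, (Subtype.val ⁻¹' ZSet (sphS 1) (sphT 1) α β : Set (G1 (sphS 1) (sphT 1))) =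
      Phi Ψ ⁻¹' {(((β.edges.length : ℤ) - α.edges.length : ℤ), (a : ℕ∞), (b : ℕ∞))} := by
  obtain ⟨a, hA, -⟩ := psi_fin Ψ hΨ2 hΨm hΨ1
    ⟨catSeq α.edges y0.1, catSeq_mem α y0 (by rw [hα]; rfl)⟩ (cat_ne_yT α _)
  obtain ⟨b, hB, -⟩ := psi_fin Ψ hΨ2 hΨm hΨ1
    ⟨catSeq β.edges y0.1, catSeq_mem β y0 (by rw [hβ]; rfl)⟩ (cat_ne_yT β _)
  refine ⟨a, b, ?_⟩
  rw [zset_tgt1 Ψ hΨ2 hΨm hΨ1 α β hα hβ]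
  refine congrArg (fun S => Phi Ψ ⁻¹' S) ?_
  rw [Set.singleton_eq_singleton_iff]
  refine Prod.ext_iff.mpr ⟨rfl, Prod.ext_iff.mpr ⟨?_, ?_⟩⟩
  · exact hA
  · exact hB

end Main3

end St11

/-- For the graph of `S³_q` (the sphere graph with `n = 1`; vertex `1` is
`(0 : Fin 2)`, vertex `2` is `(1 : Fin 2)`, `ℓᵢ = Sum.inl (i-1)`, `r₁ = Sum.inr 0`), let
`Ψ : E^∞ → ℕ̄` be the map with `Ψ(ℓ₂^∞) = 0`, `Ψ(ℓ₁^m r₁ ℓ₂^∞) = m+1`, `Ψ(ℓ₁^∞) = +∞`.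
Then the bijection `𝒢¹ → ℤ × R_tail`, `(x,k,y) ↦ (k, Ψ(x), Ψ(y))`, transports the graph
groupoid topology to the topology generated by the singletons `{(k,a,b)}`, `a, b ∈ ℕ`, and
the sets `Z_{k,m}` with `k ∈ ℤ`, `m ∈ ℕ`, `m + k ≥ 0`. -/
theorem stmt_11
    (Ψ : ↥(PathSp (sphS 1) (sphT 1)) → ℕ∞)
    (hΨ2 : ∀ x : ↥(PathSp (sphS 1) (sphT 1)),
      (∀ j : ℕ, x.1 j = Sum.inl 1) → Ψ x = 0)
    (hΨm : ∀ (m : ℕ) (x : ↥(PathSp (sphS 1) (sphT 1))),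
      (∀ j : ℕ, x.1 j =
        if j < m then (Sum.inl 0 : SphE 1) else if j = m then Sum.inr 0 else Sum.inl 1) →
      Ψ x = (m : ℕ∞) + 1)
    (hΨ1 : ∀ x : ↥(PathSp (sphS 1) (sphT 1)),
      (∀ j : ℕ, x.1 j = Sum.inl 0) → Ψ x = ⊤) :
    Function.Injective
      (fun g : G1 (sphS 1) (sphT 1) => ((g.1.2.1, Ψ g.1.1, Ψ g.1.2.2) : ℤ × ℕ∞ × ℕ∞)) ∧
    Set.range
      (fun g : G1 (sphS 1) (sphT 1) => ((g.1.2.1, Ψ g.1.1, Ψ g.1.2.2) : ℤ × ℕ∞ × ℕ∞))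
      = {p : ℤ × ℕ∞ × ℕ∞ | (p.2.1, p.2.2) ∈ RT} ∧
    G1Top (sphS 1) (sphT 1) = TopologicalSpace.induced
      (fun g : G1 (sphS 1) (sphT 1) => ((g.1.2.1, Ψ g.1.1, Ψ g.1.2.2) : ℤ × ℕ∞ × ℕ∞))
      (TopologicalSpace.generateFrom
        ({U : Set (ℤ × ℕ∞ × ℕ∞) | ∃ (k : ℤ) (a b : ℕ), U = {(k, (a : ℕ∞), (b : ℕ∞))}} ∪
         {U : Set (ℤ × ℕ∞ × ℕ∞) | ∃ (k : ℤ) (m : ℕ), 0 ≤ (m : ℤ) + k ∧ U = Zkm k m})) := by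
  classical
  have hPhi : (fun g : G1 (sphS 1) (sphT 1) =>
      ((g.1.2.1, Ψ g.1.1, Ψ g.1.2.2) : ℤ × ℕ∞ × ℕ∞)) = St11.Phi Ψ := rfl
  refine ⟨?_, ?_, ?_⟩
  · -- injectivity
    intro g g' h
    simp only at h
    have h1 : g.1.2.1 = g'.1.2.1 := congrArg (fun p => p.1) h
    have h2 : Ψ g.1.1 = Ψ g'.1.1 := congrArg (fun p => p.2.1) h
    have h3 : Ψ g.1.2.2 = Ψ g'.1.2.2 := congrArg (fun p => p.2.2) h
    apply Subtype.ext
    exact Prod.ext_iff.mpr ⟨St11.psi_inj Ψ hΨ2 hΨm hΨ1 h2,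
      Prod.ext_iff.mpr ⟨h1, St11.psi_inj Ψ hΨ2 hΨm hΨ1 h3⟩⟩
  · -- range
    ext p
    simp only [Set.mem_range, Set.mem_setOf_eq, RT]
    constructor
    · rintro ⟨g, rfl⟩
      have hiff := St11.sequiv_yT_iff g.1.2.1 g.1.1 g.1.2.2 g.2
      by_cases hx : g.1.1 = St11.yT
      · right
        exact ⟨(St11.psi_top_iff Ψ hΨ2 hΨm hΨ1 _).mpr hx,
               (St11.psi_top_iff Ψ hΨ2 hΨm hΨ1 _).mpr (hiff.mp hx)⟩
      · left
        exact ⟨fun hc => hx ((St11.psi_top_iff Ψ hΨ2 hΨm hΨ1 _).mp hc),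
               fun hc => hx (hiff.mpr ((St11.psi_top_iff Ψ hΨ2 hΨm hΨ1 _).mp hc))⟩
    · obtain ⟨k, u, v⟩ := p
      rintro (⟨h1, h2⟩ | ⟨h1, h2⟩)
      · simp only at h1 h2
        lift u to ℕ using h1 with a
        lift v to ℕ using h2 with b
        refine ⟨⟨(St11.xfin a, k, St11.xfin b), St11.sequiv_xfin k a b⟩, ?_⟩
        show (k, Ψ (St11.xfin a), Ψ (St11.xfin b)) = (k, (a : ℕ∞), (b : ℕ∞))
        rw [St11.psi_xfin Ψ hΨ2 hΨm, St11.psi_xfin Ψ hΨ2 hΨm]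
      · simp only at h1 h2
        subst h1; subst h2
        refine ⟨⟨(St11.yT, k, St11.yT), St11.sequiv_yT k⟩, ?_⟩
        show (k, Ψ St11.yT, Ψ St11.yT) = (k, ⊤, ⊤)
        rw [St11.psi_yT Ψ hΨ1]
  · -- topology
    rw [hPhi, induced_generateFrom_eq]
    letI tG : TopologicalSpace (G1 (sphS 1) (sphT 1)) := TopologicalSpace.generateFrom
      {U | ∃ α β : FinPath (sphS 1) (sphT 1), α.tgt = β.tgt ∧
        U = Subtype.val ⁻¹' ZSet (sphS 1) (sphT 1) α β}
    show tG = _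
    apply le_antisymm
    · -- B' generators open in generateFrom A
      apply le_generateFrom
      rintro U ⟨V, hV, rfl⟩
      rcases hV with ⟨k, a, b, rfl⟩ | ⟨k, m, hkm, rfl⟩
      · obtain ⟨α, β, hαβ, hz⟩ := St11.singleton_as_zset Ψ hΨ2 hΨm hΨ1 k a b
        rw [← hz]
        exact TopologicalSpace.isOpen_generateFrom_of_mem ⟨α, β, hαβ, rfl⟩
      · rw [St11.zkm_split k m, Set.preimage_union]
        apply IsOpen.union
        · set M := m + 1 + (-k).toNat with hM
          set aN : ℕ := ((M : ℤ) + k - 1).toNat with haN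
          have e1 : ((aN : ℤ)) - ((M - 1 : ℕ) : ℤ) = k := by omega
          have e2 : (M - 1 : ℕ) + 1 = M := by omega
          have e3 : Zkm k M = Zkm (((aN : ℕ) : ℤ) - ((M - 1 : ℕ) : ℤ)) ((M - 1) + 1) := by
            rw [e1, e2]
          rw [e3, ← St11.zset_tgt0 Ψ hΨ2 hΨm hΨ1 aN (M - 1)]
          exact TopologicalSpace.isOpen_generateFrom_of_mem
            ⟨_, _, by rw [St11.genFP_yT_tgt, St11.genFP_yT_tgt], rfl⟩
        · rw [Set.preimage_iUnion₂]
          refine isOpen_biUnion fun i hi => ?_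
          rw [St11.addZE_coe]
          obtain ⟨α, β, hαβ, hz⟩ := St11.singleton_as_zset Ψ hΨ2 hΨm hΨ1
            (-k) (((m + i : ℕ) : ℤ) + k).toNat (m + i)
          rw [← hz]
          exact TopologicalSpace.isOpen_generateFrom_of_mem ⟨α, β, hαβ, rfl⟩
    · -- A generators open in generateFrom B'
      apply le_generateFrom
      rintro U ⟨α, β, hαβ, rfl⟩
      by_cases h0 : α.tgt = 0
      · have hα := St11.tgt0_struct α h0
        have hβ := St11.tgt0_struct β (by rw [← hαβ]; exact h0)
        rw [hα, hβ]
        erw [St11.zset_tgt0 Ψ hΨ2 hΨm hΨ1 α.edges.length β.edges.length]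
        refine TopologicalSpace.isOpen_generateFrom_of_mem ⟨_, Or.inr ?_, rfl⟩
        exact ⟨(α.edges.length : ℤ) - β.edges.length, β.edges.length + 1, by push_cast; omega, rfl⟩
      · have h1 : α.tgt = 1 := by
          have hv := α.tgt.isLt
          have hv0 : α.tgt.1 ≠ 0 := fun hc => h0 (Fin.ext hc)
          refine Fin.ext ?_
          show α.tgt.1 = 1
          omega
        have h1' : β.tgt = 1 := by rw [← hαβ]; exact h1
        obtain ⟨a, b, hz⟩ := St11.zset_tgt1' Ψ hΨ2 hΨm hΨ1 α β h1 h1'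
        erw [hz]
        refine TopologicalSpace.isOpen_generateFrom_of_mem ⟨_, Or.inl ?_, rfl⟩
        exact ⟨(β.edges.length : ℤ) - α.edges.length, a, b, rfl⟩
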